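/- Each Gelfand–Dickey polynomial R_n involves only even powers of λ, and writing R_n = Σ_{g≥0} R_n^{(g)} λ^{2g} with R_n^{(g)} ∈ A, the coefficient R_n^{(g)} is homogeneous of total degree n − g in the variables u_k (and vanishes when g > n): R_n^{(g)} ∈ A_{n−g}. -/

import Mathlib

open MvPolynomial

/-- The derivation `∂ₓ = Σ_{k≥0} u_{k+1} ∂/∂u_k` on `A = ℝ[u₀, u₁, …]`
(the sum is finite on each polynomial). -/
noncomputable def dx (f : MvPolynomial ℕ ℝ) : MvPolynomial ℕ ℝ :=
  ∑ᶠ k : ℕ, X (k + 1) * pderiv k f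

lemma coeff_pderiv (i : ℕ) (d : ℕ →₀ ℕ) (f : MvPolynomial ℕ ℝ) :
    coeff d (pderiv i f) = coeff (d + Finsupp.single i 1) f * (d i + 1) := by
  induction f using MvPolynomial.induction_on' with
  | monomial s a =>
    rw [pderiv_monomial, coeff_monomial, coeff_monomial]
    by_cases hs : s = d + Finsupp.single i 1
    · have h1 : s - Finsupp.single i 1 = d := by
        rw [hs]; exact add_tsub_cancel_right d _
      have h2 : (s i : ℝ) = d i + 1 := by
        rw [hs]; push_cast [Finsupp.add_apply, Finsupp.single_eq_same]; ring
      simp [hs, h1, h2]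
    · rw [if_neg hs, zero_mul]
      by_cases hd : s - Finsupp.single i 1 = d
      · rw [if_pos hd]
        by_cases hsi : s i = 0
        · simp [hsi]
        · exfalso
          apply hs
          rw [← hd, tsub_add_cancel_of_le]
          rwa [Finsupp.single_le_iff, Nat.one_le_iff_ne_zero]
      · rw [if_neg hd]
  | add p q hp hq => simp [map_add, coeff_add, hp, hq, add_mul]

lemma coeff_add_single_eq_zero {i : ℕ} {f : MvPolynomial ℕ ℝ} (h : pderiv i f = 0)
    (m : ℕ →₀ ℕ) : coeff (m + Finsupp.single i 1) f = 0 := by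
  have := coeff_pderiv i m f
  rw [h, coeff_zero] at this
  have hne : ((m i : ℝ) + 1) ≠ 0 := by positivity
  field_simp at this
  exact (mul_eq_zero.1 this.symm).resolve_right hne
lemma dx_eq_sum {f : MvPolynomial ℕ ℝ} {N : ℕ} (hN : ∀ k, N ≤ k → pderiv k f = 0) :
    dx f = ∑ k ∈ Finset.range N, X (k + 1) * pderiv k f := by
  apply finsum_eq_sum_of_support_subset
  intro k hk
  simp only [Function.mem_support] at hk
  simp only [Finset.coe_range, Set.mem_Iio]
  by_contra h
  push_neg at h
  rw [hN k h, mul_zero] at hk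
  exact hk rfl

lemma exists_bound (f : MvPolynomial ℕ ℝ) : ∀ k, f.vars.sup id + 1 ≤ k → pderiv k f = 0 := by
  intro k hk
  apply pderiv_eq_zero_of_notMem_vars
  intro hmem
  have := Finset.le_sup (f := id) hmem
  simp only [id] at this
  omega

lemma dx_zero : dx 0 = 0 := by
  rw [dx_eq_sum (N := 0) (fun k _ => by simp)]
  simp

lemma dx_C (a : ℝ) : dx (C a) = 0 := by
  rw [dx_eq_sum (N := 0) (fun k _ => by simp [pderiv_C])]
  simp

lemma dx_add (f g : MvPolynomial ℕ ℝ) : dx (f + g) = dx f + dx g := by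
  set N := max (f.vars.sup id + 1) (max (g.vars.sup id + 1) ((f+g).vars.sup id + 1)) with hN
  rw [dx_eq_sum (N := N) (fun k hk => exists_bound _ k (by omega)),
    dx_eq_sum (N := N) (fun k hk => exists_bound f k (by omega)),
    dx_eq_sum (N := N) (fun k hk => exists_bound g k (by omega)),
    ← Finset.sum_add_distrib]
  exact Finset.sum_congr rfl fun k _ => by rw [map_add, mul_add]

lemma dx_C_mul (a : ℝ) (f : MvPolynomial ℕ ℝ) : dx (C a * f) = C a * dx f := by
  set N := max (f.vars.sup id + 1) ((C a * f).vars.sup id + 1) with hN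
  rw [dx_eq_sum (N := N) (fun k hk => exists_bound _ k (by omega)),
    dx_eq_sum (N := N) (fun k hk => exists_bound f k (by omega)),
    Finset.mul_sum]
  exact Finset.sum_congr rfl fun k _ => by rw [pderiv_C_mul]; ring
lemma pderiv_pderiv_zero {i k : ℕ} {f : MvPolynomial ℕ ℝ} (h : pderiv i f = 0) :
    pderiv i (pderiv k f) = 0 := by
  ext d
  rw [coeff_pderiv, coeff_pderiv, coeff_zero, add_right_comm,
    coeff_add_single_eq_zero h, zero_mul, zero_mul]

lemma pderiv_eq_zero_of_dx_eq_zero {f : MvPolynomial ℕ ℝ} (hf : dx f = 0) (k : ℕ) :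
    pderiv k f = 0 := by
  classical
  by_contra hk
  set T := f.vars.filter (fun k => pderiv k f ≠ 0) with hT
  have hkT : k ∈ T := by
    refine Finset.mem_filter.2 ⟨?_, hk⟩
    by_contra h
    exact hk (pderiv_eq_zero_of_notMem_vars h)
  have hTne : T.Nonempty := ⟨k, hkT⟩
  set N := T.max' hTne with hNdef
  have hNmem : N ∈ T := T.max'_mem hTne
  have hNne : pderiv N f ≠ 0 := (Finset.mem_filter.1 hNmem).2
  have htop : ∀ j, N < j → pderiv j f = 0 := by
    intro j hj
    by_contra hjne
    have : j ∈ T := Finset.mem_filter.2 ⟨by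
      by_contra h; exact hjne (pderiv_eq_zero_of_notMem_vars h), hjne⟩
    exact absurd (Finset.le_max' T j this) (by omega)
  set M := f.vars.sup id + 1 with hM
  have hNM : N < M := by
    have := Finset.le_sup (f := id) (Finset.mem_filter.1 hNmem).1
    simp only [id] at this; omega
  have hsum := dx_eq_sum (f := f) (N := M) (fun j hj => exists_bound f j hj)
  have h0 : pderiv (N + 1) (dx f) = 0 := by rw [hf, map_zero]
  rw [hsum, map_sum] at h0
  have hterm : ∀ j ∈ Finset.range M,
      pderiv (N + 1) (X (j + 1) * pderiv j f)
        = (if j = N then pderiv N f else 0) := by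
    intro j _
    rw [pderiv_mul, pderiv_pderiv_zero (htop (N + 1) (by omega)), mul_zero, add_zero]
    by_cases hj : j = N
    · subst hj; rw [pderiv_X_self, one_mul, if_pos rfl]
    · rw [pderiv_X_of_ne (by omega), zero_mul, if_neg hj]
  rw [Finset.sum_congr rfl hterm, Finset.sum_ite_eq' (Finset.range M) N
    (fun _ => pderiv N f)] at h0
  rw [if_pos (Finset.mem_range.2 hNM)] at h0
  exact hNne h0

lemma eq_C_of_dx_eq_zero {f : MvPolynomial ℕ ℝ} (hf : dx f = 0) : f = C (coeff 0 f) := by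
  ext m
  by_cases hm : m = 0
  · subst hm; simp
  · rw [coeff_C, if_neg (Ne.symm hm)]
    have : m.support.Nonempty := Finsupp.support_nonempty_iff.2 hm
    obtain ⟨i, hi⟩ := this
    have hmi : 1 ≤ m i := Nat.one_le_iff_ne_zero.2 (Finsupp.mem_support_iff.1 hi)
    have hrw : m = (m - Finsupp.single i 1) + Finsupp.single i 1 := by
      rw [tsub_add_cancel_of_le]
      rwa [Finsupp.single_le_iff]
    rw [hrw]
    exact coeff_add_single_eq_zero (pderiv_eq_zero_of_dx_eq_zero hf i) _

lemma eq_zero_of_dx_eq_zero {f : MvPolynomial ℕ ℝ} (hf : dx f = 0) (h0 : coeff 0 f = 0) :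
    f = 0 := by
  rw [eq_C_of_dx_eq_zero hf, h0, map_zero]

lemma my_degree_add (a b : ℕ →₀ ℕ) : (a + b).degree = a.degree + b.degree := by
  classical
  simp only [Finsupp.degree]
  exact map_add Finsupp.degree a b

lemma my_degree_single (i n : ℕ) : (Finsupp.single i n).degree = n := by
  classical
  simp only [Finsupp.degree]
  by_cases hn : n = 0
  · simp [hn]
  · exact Finsupp.degree_single i n

lemma term_homog {f : MvPolynomial ℕ ℝ} {m : ℕ} (hf : f.IsHomogeneous m) (k : ℕ) :
    (X (k + 1) * pderiv k f).IsHomogeneous m := by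
  classical
  conv_lhs => rw [f.as_sum]
  rw [map_sum, Finset.mul_sum]
  apply IsHomogeneous.sum
  intro d hd
  rw [pderiv_monomial]
  by_cases hdk : d k = 0
  · rw [hdk]; simp [isHomogeneous_zero]
  · have hdeg : d.degree = m := by
      have := hf (Finsupp.mem_support_iff.1 hd)
      rw [Finsupp.degree_eq_weight_one]; exact this
    have hle : Finsupp.single k 1 ≤ d := by
      rw [Finsupp.single_le_iff]; omega
    rw [X, monomial_mul, one_mul]
    apply isHomogeneous_monomial
    rw [my_degree_add, my_degree_single]
    have : (d - Finsupp.single k 1).degree + 1 = m := by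
      have h2 : ((d - Finsupp.single k 1) + Finsupp.single k 1).degree = m := by
        rw [tsub_add_cancel_of_le hle, hdeg]
      rw [my_degree_add, my_degree_single] at h2
      exact h2
    omega

lemma dx_homog {f : MvPolynomial ℕ ℝ} {m : ℕ} (hf : f.IsHomogeneous m) :
    (dx f).IsHomogeneous m := by
  rw [dx_eq_sum (exists_bound f)]
  exact IsHomogeneous.sum _ _ _ (fun k _ => term_homog hf k)

lemma dx_sum {ι : Type*} (s : Finset ι) (F : ι → MvPolynomial ℕ ℝ) :
    dx (∑ i ∈ s, F i) = ∑ i ∈ s, dx (F i) := by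
  classical
  induction s using Finset.induction_on with
  | empty => simp [dx_zero]
  | insert _ _ hx ih => rw [Finset.sum_insert hx, Finset.sum_insert hx, dx_add, ih]

lemma isHomogeneous_of_dx {f : MvPolynomial ℕ ℝ} (h0 : coeff 0 f = 0) {m : ℕ}
    (h : (dx f).IsHomogeneous m) : f.IsHomogeneous m := by
  classical
  set D := f.totalDegree with hD
  have hcomp : ∀ d, d ≠ m → homogeneousComponent d f = 0 := by
    intro d hdm
    have hdx0 : dx (homogeneousComponent d f) = 0 := by
      have hf : f = ∑ i ∈ Finset.range (D + 1), homogeneousComponent i f :=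
        (sum_homogeneousComponent f).symm
      by_cases hdD : d ≤ D
      · have heq : homogeneousComponent d (dx f) = dx (homogeneousComponent d f) := by
          conv_lhs => rw [hf]
          rw [dx_sum, map_sum]
          rw [Finset.sum_congr rfl (fun i _ => homogeneousComponent_of_mem
            (mem_homogeneousSubmodule _ _ |>.2 (dx_homog (homogeneousComponent_isHomogeneous i f))) (m := d))]
          rw [Finset.sum_ite_eq (Finset.range (D+1)) d]
          rw [if_pos (Finset.mem_range.2 (by omega))]
        rw [← heq, homogeneousComponent_of_mem (mem_homogeneousSubmodule _ _ |>.2 h),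
          if_neg hdm]
      · rw [homogeneousComponent_eq_zero d f (by omega), dx_zero]
    apply eq_zero_of_dx_eq_zero hdx0
    rw [coeff_homogeneousComponent]
    by_cases hd0 : d = 0
    · subst hd0; simpa using h0
    · rw [if_neg (by simpa [map_zero] using Ne.symm hd0)]
  have hf : f = ∑ i ∈ Finset.range (D + 1), homogeneousComponent i f :=
    (sum_homogeneousComponent f).symm
  by_cases hmD : m ≤ D
  · have : f = homogeneousComponent m f := by
      conv_lhs => rw [hf]
      rw [Finset.sum_congr rfl (fun i hi => show homogeneousComponent i f =
        if i = m then homogeneousComponent m f else 0 by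
          by_cases him : i = m
          · rw [if_pos him, him]
          · rw [if_neg him, hcomp i him])]
      rw [Finset.sum_ite_eq' (Finset.range (D+1)) m, if_pos (Finset.mem_range.2 (by omega))]
    have h2 := homogeneousComponent_isHomogeneous m f
    rw [← this] at h2
    exact h2
  · have : f = 0 := by
      rw [hf]
      apply Finset.sum_eq_zero
      intro i hi
      exact hcomp i (by simp at hi; omega)
    rw [this]
    exact isHomogeneous_zero _ _ _


/-- The λ-linear extension of `∂ₓ` to `A[λ]` (acting on coefficients). -/
noncomputable def dxP (p : Polynomial (MvPolynomial ℕ ℝ)) :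
    Polynomial (MvPolynomial ℕ ℝ) :=
  p.sum fun n a => Polynomial.C (dx a) * Polynomial.X ^ n

lemma dxP_coeff (p : Polynomial (MvPolynomial ℕ ℝ)) (i : ℕ) :
    (dxP p).coeff i = dx (p.coeff i) := by
  classical
  rw [dxP, Polynomial.sum, Polynomial.finset_sum_coeff]
  have : ∀ n ∈ p.support,
      (Polynomial.C (dx (p.coeff n)) * Polynomial.X ^ n).coeff i
        = if n = i then dx (p.coeff n) else 0 := by
    intro n _
    rw [Polynomial.coeff_C_mul, Polynomial.coeff_X_pow]
    by_cases h : n = i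
    · subst h; simp
    · rw [if_neg (fun h' => h h'.symm), if_neg h, mul_zero]
  rw [Finset.sum_congr rfl this, Finset.sum_ite_eq' p.support i]
  by_cases hi : i ∈ p.support
  · rw [if_pos hi]
  · rw [if_neg hi, Polynomial.notMem_support_iff.1 hi, dx_zero]

lemma isHomogeneous_of_C_mul {a : ℝ} (ha : a ≠ 0) {f : MvPolynomial ℕ ℝ} {m : ℕ}
    (h : (C a * f).IsHomogeneous m) : f.IsHomogeneous m := by
  intro d hd
  exact h (d := d) (by rw [coeff_C_mul]; exact mul_ne_zero ha hd)

lemma eq_zero_of_C_mul {a : ℝ} (ha : a ≠ 0) {f : MvPolynomial ℕ ℝ}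
    (h : C a * f = 0) : f = 0 := by
  rcases mul_eq_zero.1 h with h1 | h1
  · exact absurd (by rwa [C_eq_zero] at h1) ha
  · exact h1


/-- `p ∈ A[λ]` has zero constant term: the constant term (in the variables `u_k`)
of every `λ`-coefficient of `p` vanishes. -/
def NoConst (p : Polynomial (MvPolynomial ℕ ℝ)) : Prop :=
  ∀ i : ℕ, coeff 0 (p.coeff i) = 0

/-- `R : ℕ → A[λ]` is the sequence of Gelfand–Dickey polynomials:
`R 0 = 1`, each `R n` for `n ≥ 1` has zero constant term, and the Lenard recursion
`(2n+1) ∂ₓ R_{n+1} = u₁ R_n + 2 u₀ ∂ₓ R_n + (λ²/4) ∂ₓ³ R_n` holds. -/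
def IsGD (R : ℕ → Polynomial (MvPolynomial ℕ ℝ)) : Prop :=
  R 0 = 1 ∧ (∀ n : ℕ, 1 ≤ n → NoConst (R n)) ∧
  ∀ n : ℕ,
    Polynomial.C (MvPolynomial.C (2 * (n : ℝ) + 1)) * dxP (R (n + 1)) =
      Polynomial.C (X 1) * R n
      + Polynomial.C (MvPolynomial.C 2 * X 0) * dxP (R n)
      + Polynomial.C (MvPolynomial.C (1 / 4 : ℝ)) * Polynomial.X ^ 2
          * dxP (dxP (dxP (R n)))

/-- each `R_n` involves only even powers of `λ`, and writing
`R_n = Σ_g R_n^{(g)} λ^{2g}`, the coefficient `R_n^{(g)}` is homogeneous of total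
degree `n − g` in the variables `u_k`, and vanishes when `g > n`. -/
theorem gelfandDickey_even_and_homogeneous :
    ∀ R : ℕ → Polynomial (MvPolynomial ℕ ℝ), IsGD R → ∀ n : ℕ,
      (∀ i : ℕ, Odd i → (R n).coeff i = 0) ∧
      (∀ g : ℕ, g ≤ n → ((R n).coeff (2 * g)).IsHomogeneous (n - g)) ∧
      (∀ g : ℕ, n < g → (R n).coeff (2 * g) = 0) := by
  intro R hR
  obtain ⟨h0, hnc, hrec⟩ := hR
  intro n
  induction n with
  | zero =>
    refine ⟨?_, ?_, ?_⟩
    · intro i hi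
      rw [h0, Polynomial.coeff_one, if_neg (by rcases hi with ⟨k, hk⟩; omega)]
    · intro g hg
      have hg0 : g = 0 := by omega
      subst hg0
      rw [h0]
      simpa using isHomogeneous_one ℕ ℝ
    · intro g hg
      rw [h0, Polynomial.coeff_one, if_neg (by omega)]
  | succ n ih =>
    obtain ⟨ho, hh, hz⟩ := ih
    have hcne : (2 * (n : ℝ) + 1) ≠ 0 := by positivity
    have key : ∀ i : ℕ, C (2 * (n : ℝ) + 1) * dx ((R (n + 1)).coeff i) =
        X 1 * (R n).coeff i + (C 2 * X 0) * dx ((R n).coeff i)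
        + C (1 / 4 : ℝ) *
            (if 2 ≤ i then dx (dx (dx ((R n).coeff (i - 2)))) else 0) := by
      intro i
      have h := congrArg (fun p => Polynomial.coeff p i) (hrec n)
      have h3 : Polynomial.C (MvPolynomial.C (1 / 4 : ℝ)) * Polynomial.X ^ 2
          * dxP (dxP (dxP (R n)))
          = Polynomial.C (MvPolynomial.C (1 / 4 : ℝ))
            * (dxP (dxP (dxP (R n))) * Polynomial.X ^ 2) := by ring
      rw [h3] at h
      rw [Polynomial.coeff_C_mul, Polynomial.coeff_add, Polynomial.coeff_add,
        Polynomial.coeff_C_mul, Polynomial.coeff_C_mul, Polynomial.coeff_C_mul,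
        Polynomial.coeff_mul_X_pow', dxP_coeff, dxP_coeff] at h
      by_cases h2 : 2 ≤ i
      · rw [if_pos h2] at h
        rw [dxP_coeff, dxP_coeff, dxP_coeff] at h
        rw [if_pos h2]
        exact h
      · rw [if_neg h2] at h
        rw [if_neg h2]
        exact h
    have hKer : ∀ i : ℕ, (X 1 * (R n).coeff i + (C 2 * X 0) * dx ((R n).coeff i)
        + C (1 / 4 : ℝ) *
            (if 2 ≤ i then dx (dx (dx ((R n).coeff (i - 2)))) else 0)) = 0 →
        (R (n + 1)).coeff i = 0 := by
      intro i hzero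
      have h := key i
      rw [hzero] at h
      have hd : dx ((R (n + 1)).coeff i) = 0 := eq_zero_of_C_mul hcne h
      exact eq_zero_of_dx_eq_zero hd (hnc (n + 1) (by omega) i)
    refine ⟨?_, ?_, ?_⟩
    · -- odd coefficients vanish
      intro i hi
      apply hKer i
      have hmain : (R n).coeff i = 0 := ho i hi
      have hite : (if 2 ≤ i then dx (dx (dx ((R n).coeff (i - 2)))) else 0) = 0 := by
        split_ifs with h2
        · rw [ho (i - 2) (by rcases hi with ⟨k, hk⟩; exact ⟨k - 1, by omega⟩),
            dx_zero, dx_zero, dx_zero]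
        · rfl
      rw [hmain, hite, dx_zero, mul_zero, mul_zero, mul_zero, add_zero, add_zero]
    · -- homogeneity
      intro g hg
      have hc0 : coeff 0 ((R (n + 1)).coeff (2 * g)) = 0 := hnc (n + 1) (by omega) (2 * g)
      apply isHomogeneous_of_dx hc0
      apply isHomogeneous_of_C_mul hcne
      rw [key (2 * g)]
      have ht1 : (X 1 * (R n).coeff (2 * g)).IsHomogeneous (n + 1 - g) := by
        by_cases hgn : g ≤ n
        · have h2 := (isHomogeneous_X ℝ 1).mul (hh g hgn)
          rwa [show 1 + (n - g) = n + 1 - g by omega] at h2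
        · rw [hz g (by omega), mul_zero]
          exact isHomogeneous_zero _ _ _
      have ht2 : ((C 2 * X 0) * dx ((R n).coeff (2 * g))).IsHomogeneous (n + 1 - g) := by
        by_cases hgn : g ≤ n
        · have h2 := (isHomogeneous_C_mul_X (2 : ℝ) 0).mul (dx_homog (hh g hgn))
          rwa [show 1 + (n - g) = n + 1 - g by omega] at h2
        · rw [hz g (by omega), dx_zero, mul_zero]
          exact isHomogeneous_zero _ _ _
      have ht3 : (C (1 / 4 : ℝ) *
          (if 2 ≤ 2 * g then dx (dx (dx ((R n).coeff (2 * g - 2)))) else 0)).IsHomogeneous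
            (n + 1 - g) := by
        split_ifs with h2
        · have hg1 : 1 ≤ g := by omega
          have hgn : g - 1 ≤ n := by omega
          have hidx : 2 * g - 2 = 2 * (g - 1) := by omega
          have h4 := (dx_homog (dx_homog (dx_homog (hh (g - 1) hgn)))).C_mul (1 / 4 : ℝ)
          rw [hidx]
          rwa [show n - (g - 1) = n + 1 - g by omega] at h4
        · rw [mul_zero]
          exact isHomogeneous_zero _ _ _
      exact (ht1.add ht2).add ht3
    · -- vanishing for g > n + 1
      intro g hg
      apply hKer (2 * g)
      rw [hz g (by omega), if_pos (by omega),
        show 2 * g - 2 = 2 * (g - 1) by omega, hz (g - 1) (by omega)]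
      simp [dx_zero]
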